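/- Two pilot observations with linearly independent pilot pairs suffice for exact filter construction: if (x₁, x'₁) and (x₂, x'₂) are linearly independent in ℂ², and Y_q = x_q h + x'_q h' with h, h' ∈ ℂⁿ linearly independent, then G = (Σ_{q=1}^{2} Y_q Y_q*)⁺ (Σ_{q=1}^{2} Y_q x̄_q) satisfies ⟨G, h⟩ = 1 and ⟨G, h'⟩ = 0. -/
import Mathlib


open MeasureTheory Matrix Finset
open scoped ComplexConjugate BigOperators

noncomputable section

/-- Hermitian inner product on `Fin n → ℂ`, conjugate-linear in the first slot. -/
def herm {n : ℕ} (G Y : Fin n → ℂ) : ℂ := ∑ i, conj (G i) * Y i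

/-- Squared Euclidean norm. -/
def sqNorm {n : ℕ} (G : Fin n → ℂ) : ℝ := ∑ i, ‖G i‖ ^ 2

/-- The four Penrose conditions: `Rp` is the Moore–Penrose pseudoinverse of `R`. -/
def IsPinv {n : ℕ} (R Rp : Matrix (Fin n) (Fin n) ℂ) : Prop :=
  R * Rp * R = R ∧ Rp * R * Rp = Rp ∧ (R * Rp)ᴴ = R * Rp ∧ (Rp * R)ᴴ = Rp * R

/-- Mean square error `E[|⟨G,Y⟩ − X|²]`. -/
def mse {n : ℕ} {Ω : Type} [MeasurableSpace Ω] (μ : Measure Ω)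
    (Y : Ω → Fin n → ℂ) (X : Ω → ℂ) (G : Fin n → ℂ) : ℝ :=
  ∫ ω, ‖herm G (Y ω) - X ω‖ ^ 2 ∂μ

/-- Second-moment matrix `R = E[Y Y*]`. -/
def secondMoment {n : ℕ} {Ω : Type} [MeasurableSpace Ω] (μ : Measure Ω)
    (Y : Ω → Fin n → ℂ) : Matrix (Fin n) (Fin n) ℂ :=
  Matrix.of fun i j => ∫ ω, Y ω i * conj (Y ω j) ∂μ

/-- Cross-correlation vector `r = E[Y conj(X)]`. -/
def crossCorr {n : ℕ} {Ω : Type} [MeasurableSpace Ω] (μ : Measure Ω)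
    (Y : Ω → Fin n → ℂ) (X : Ω → ℂ) : Fin n → ℂ :=
  fun i => ∫ ω, Y ω i * conj (X ω) ∂μ

private lemma herm_comb_right {n : ℕ} (a u w : Fin n → ℂ) (c e : ℂ) :
    herm a (c • u + e • w) = c * herm a u + e * herm a w := by
  simp only [herm, Pi.add_apply, Pi.smul_apply, smul_eq_mul, Finset.mul_sum,
    ← Finset.sum_add_distrib]
  exact Finset.sum_congr rfl fun i _ => by ring

private lemma herm_comb_left {n : ℕ} (a b u : Fin n → ℂ) (c e : ℂ) :
    herm (c • a + e • b) u = conj c * herm a u + conj e * herm b u := by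
  simp only [herm, Pi.add_apply, Pi.smul_apply, smul_eq_mul, map_add, _root_.map_mul,
    Finset.mul_sum, ← Finset.sum_add_distrib]
  exact Finset.sum_congr rfl fun i _ => by ring

private lemma herm_self_eq_zero {n : ℕ} {v : Fin n → ℂ} (hv : herm v v = 0) : v = 0 := by
  have hcast : herm v v = ((∑ i, Complex.normSq (v i) : ℝ) : ℂ) := by
    rw [herm]
    push_cast
    exact Finset.sum_congr rfl fun i _ => by
      rw [Complex.normSq_eq_conj_mul_self]
  rw [hcast] at hv
  have h1 : ∑ i, Complex.normSq (v i) = 0 := by exact_mod_cast hv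
  funext i
  have := (Finset.sum_eq_zero_iff_of_nonneg
    (fun i _ => Complex.normSq_nonneg (v i))).mp h1 i (Finset.mem_univ i)
  simpa using Complex.normSq_eq_zero.mp this

theorem two_pilots_suffice {n : ℕ} (hn : 2 ≤ n)
    (h h' : Fin n → ℂ) (hli : LinearIndependent ℂ ![h, h'])
    (x x' : Fin 2 → ℂ)
    (hpilots : LinearIndependent ℂ ![(![x 0, x' 0] : Fin 2 → ℂ), ![x 1, x' 1]])
    (Y : Fin 2 → Fin n → ℂ) (hYdef : ∀ q, Y q = x q • h + x' q • h')
    (Ap : Matrix (Fin n) (Fin n) ℂ)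
    (hAp : IsPinv (∑ q, vecMulVec (Y q) (star (Y q))) Ap) :
    herm (Ap.mulVec (∑ q, conj (x q) • Y q)) h = 1 ∧
      herm (Ap.mulVec (∑ q, conj (x q) • Y q)) h' = 0 := by
  set R : Matrix (Fin n) (Fin n) ℂ := ∑ q, vecMulVec (Y q) (star (Y q)) with hRdef
  set r : Fin n → ℂ := ∑ q, conj (x q) • Y q with hrdef
  obtain ⟨hP1, hP2, hP3, hP4⟩ := hAp
  -- R is Hermitian
  have hRH : Rᴴ = R := by
    ext i j
    simp only [hRdef, conjTranspose_apply, Matrix.sum_apply, vecMulVec_apply, Pi.star_apply,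
      star_sum, star_mul', star_star]
    exact Finset.sum_congr rfl fun q _ => by ring
  -- action of R on vectors
  have hmulVecR : ∀ wv : Fin n → ℂ, R *ᵥ wv = ∑ q, (herm (Y q) wv) • Y q := by
    intro wv
    funext i
    simp only [hRdef, mulVec, dotProduct, Matrix.sum_apply, vecMulVec_apply, Pi.star_apply,
      Finset.sum_apply, Pi.smul_apply, smul_eq_mul, herm, Finset.sum_mul]
    rw [Finset.sum_comm]
    refine Finset.sum_congr rfl fun q _ => Finset.sum_congr rfl fun j _ => ?_
    simp only [starRingEnd_apply]
    ring
  -- the pilot matrix and its injectivity / surjectivity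
  set Xm : Matrix (Fin 2) (Fin 2) ℂ := !![x 0, x 1; x' 0, x' 1] with hXm
  have hXker : ∀ c : Fin 2 → ℂ, Xm *ᵥ c = 0 → c = 0 := by
    intro c hc
    have h0 := congrFun hc 0
    have h1 := congrFun hc 1
    simp only [hXm, mulVec, dotProduct, Fin.sum_univ_two, Matrix.cons_val', Matrix.cons_val_zero,
      Matrix.cons_val_one, Matrix.head_cons, Matrix.empty_val', Matrix.cons_val_fin_one,
      Matrix.head_fin_const, Pi.zero_apply, Matrix.of_apply] at h0 h1
    have hli2 := (LinearIndependent.pair_iff.mp hpilots) (c 0) (c 1) ?_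
    · funext q; fin_cases q <;> simp [hli2.1, hli2.2]
    · funext j
      fin_cases j <;> simp <;> [linear_combination h0; linear_combination h1]
  have hXinj : Function.Injective Xm.mulVecLin := by
    rw [← LinearMap.ker_eq_bot, LinearMap.ker_eq_bot']
    intro c hc
    exact hXker c (by simpa [Matrix.mulVecLin_apply] using hc)
  have hXsurj : Function.Surjective Xm.mulVecLin :=
    LinearMap.injective_iff_surjective.mp hXinj
  -- linear independence of Y 0, Y 1
  have hYli : ∀ a b : ℂ, a • Y 0 + b • Y 1 = 0 → a = 0 ∧ b = 0 := by
    intro a b hab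
    rw [hYdef 0, hYdef 1] at hab
    have hcomb : (x 0 * a + x 1 * b) • h + (x' 0 * a + x' 1 * b) • h' = 0 := by
      rw [← hab]; module
    obtain ⟨ha, hb⟩ := (LinearIndependent.pair_iff.mp hli) _ _ hcomb
    have := hXker ![a, b] ?_
    · exact ⟨congrFun this 0, congrFun this 1⟩
    · funext j
      fin_cases j <;> simp [hXm, mulVec, dotProduct, Fin.sum_univ_two] <;>
        [linear_combination ha; linear_combination hb]
  -- the Gram matrix of (Y 0, Y 1) is invertible: we can prescribe inner products
  have hsolve : ∀ c : Fin 2 → ℂ, ∃ u : Fin n → ℂ, ∀ p, herm (Y p) u = c p := by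
    set M : Matrix (Fin 2) (Fin 2) ℂ := Matrix.of fun p q => herm (Y p) (Y q) with hM
    have hMker : ∀ d : Fin 2 → ℂ, M *ᵥ d = 0 → d = 0 := by
      intro d hd
      set v : Fin n → ℂ := d 0 • Y 0 + d 1 • Y 1 with hv
      have hpv : ∀ p, herm (Y p) v = 0 := by
        intro p
        have := congrFun hd p
        simpa [hv, herm_comb_right, hM, mulVec, dotProduct, Fin.sum_univ_two, mul_comm]
          using this
      have hvv : herm v v = 0 := by
        rw [hv, herm_comb_left, ← hv, hpv 0, hpv 1]
        ring
      have hv0 : v = 0 := herm_self_eq_zero hvv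
      obtain ⟨h0, h1⟩ := hYli (d 0) (d 1) (by rw [← hv]; exact hv0)
      funext q; fin_cases q <;> simp [h0, h1]
    have hMinj : Function.Injective M.mulVecLin := by
      rw [← LinearMap.ker_eq_bot, LinearMap.ker_eq_bot']
      intro d hd
      exact hMker d (by simpa [Matrix.mulVecLin_apply] using hd)
    have hMsurj : Function.Surjective M.mulVecLin :=
      LinearMap.injective_iff_surjective.mp hMinj
    intro c
    obtain ⟨d, hd⟩ := hMsurj c
    refine ⟨d 0 • Y 0 + d 1 • Y 1, fun p => ?_⟩
    have := congrFun hd p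
    simp only [Matrix.mulVecLin_apply, mulVec, dotProduct, Fin.sum_univ_two, hM,
      Matrix.of_apply] at this
    rw [herm_comb_right, ← this]
    ring
  -- r is in the range of R
  obtain ⟨w, hwprop⟩ := hsolve (fun q => conj (x q))
  have hRw : R *ᵥ w = r := by
    rw [hmulVecR, hrdef]
    exact Finset.sum_congr rfl fun q _ => by rw [hwprop q]
  -- the key computation
  have key : ∀ (u v : Fin n → ℂ), R *ᵥ u = v →
      herm (Ap *ᵥ r) v = star r ⬝ᵥ u := by
    intro u v huv
    have hApR : Apᴴ * R = R * Ap := by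
      calc Apᴴ * R = Apᴴ * Rᴴ := by rw [hRH]
        _ = (R * Ap)ᴴ := by rw [conjTranspose_mul]
        _ = R * Ap := hP3
    have hfix : (R * Ap) *ᵥ r = r := by
      rw [← hRw, mulVec_mulVec, hP1]
    have hdot : ∀ a b : Fin n → ℂ, herm a b = star a ⬝ᵥ b := by
      intro a b; simp only [herm, dotProduct, Pi.star_apply, starRingEnd_apply]
    calc herm (Ap *ᵥ r) v = star (Ap *ᵥ r) ⬝ᵥ v := hdot _ _
      _ = (star r ᵥ* Apᴴ) ⬝ᵥ v := by rw [star_mulVec]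
      _ = star r ⬝ᵥ (Apᴴ *ᵥ v) := (dotProduct_mulVec _ _ _).symm
      _ = star r ⬝ᵥ ((R * Ap) *ᵥ u) := by rw [← huv, mulVec_mulVec, hApR]
      _ = (star r ᵥ* (R * Ap)) ⬝ᵥ u := dotProduct_mulVec _ _ _
      _ = star ((R * Ap)ᴴ *ᵥ r) ⬝ᵥ u := by rw [star_mulVec, conjTranspose_conjTranspose]
      _ = star r ⬝ᵥ u := by rw [hP3, hfix]
  -- main step
  have main : ∀ (v : Fin n → ℂ) (e : Fin 2 → ℂ), e 0 • h + e 1 • h' = v →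
      herm (Ap *ᵥ r) v = e 0 := by
    intro v e hv
    obtain ⟨c, hc⟩ := hXsurj e
    have hc' : Xm *ᵥ c = e := by rw [← Matrix.mulVecLin_apply]; exact hc
    have hc0 : x 0 * c 0 + x 1 * c 1 = e 0 := by
      have := congrFun hc' 0
      simpa [hXm, mulVec, dotProduct, Fin.sum_univ_two] using this
    have hc1 : x' 0 * c 0 + x' 1 * c 1 = e 1 := by
      have := congrFun hc' 1
      simpa [hXm, mulVec, dotProduct, Fin.sum_univ_two] using this
    obtain ⟨u, hu⟩ := hsolve c
    have hRu : R *ᵥ u = v := by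
      rw [hmulVecR, Fin.sum_univ_two, hu 0, hu 1, hYdef 0, hYdef 1, ← hv, ← hc0, ← hc1]
      module
    have hru : star r ⬝ᵥ u = e 0 := by
      rw [← hc0, ← hu 0, ← hu 1, hrdef, Fin.sum_univ_two]
      simp only [dotProduct, herm, Pi.star_apply, Pi.add_apply, Pi.smul_apply, smul_eq_mul,
        star_add, star_mul', starRingEnd_apply, star_star, add_mul, Finset.sum_add_distrib,
        Finset.mul_sum]
      congr 1 <;> exact Finset.sum_congr rfl fun i _ => by ring
    rw [key u v hRu, hru]
  constructor
  · exact main h ![1, 0] (by simp)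
  · exact main h' ![0, 1] (by simp)
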